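/- For m ∈ (0,1) and h > 0, with f(r) = (r²/(r² - h²))^{1/(1-m)}: there exists a constant C = C(m) > 0, independent of h, such that for all h > 1 and all r > h, each of |f - f^m|, |r² f^{m-2}(f')²|, |r² f^{m-1} f''|, and |r f^{m-1} f'| is bounded above by -C r f'(r). -/

import Mathlib

set_option maxHeartbeats 1000000 in
theorem stmt_13 (m : ℝ) (hm : m ∈ Set.Ioo (0:ℝ) 1)
    (f : ℝ → ℝ → ℝ)
    (hf : ∀ h r : ℝ, f h r = (r ^ 2 / (r ^ 2 - h ^ 2)) ^ (1 / (1 - m))) :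
    ∃ C > (0:ℝ), ∀ h > (1:ℝ), ∀ r > h,
      |f h r - f h r ^ m| ≤ -(C * (r * deriv (f h) r))
      ∧ |r ^ 2 * f h r ^ (m - 2) * (deriv (f h) r) ^ 2| ≤ -(C * (r * deriv (f h) r))
      ∧ |r ^ 2 * f h r ^ (m - 1) * deriv (deriv (f h)) r| ≤ -(C * (r * deriv (f h) r))
      ∧ |r * f h r ^ (m - 1) * deriv (f h) r| ≤ -(C * (r * deriv (f h) r)) := by
  obtain ⟨hm0, hm1⟩ := hm
  have h1m : (0:ℝ) < 1 - m := by linarith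
  set p : ℝ := 1 / (1 - m) with hp
  have hp1 : 1 < p := by
    rw [hp, lt_div_iff₀ h1m]; linarith
  have hp0 : 0 < p := by linarith
  have hpm : p * m = p - 1 := by
    rw [hp]; field_simp; ring
  refine ⟨4*p+4, by linarith, ?_⟩
  intro h hh r hr
  have hh0 : (0:ℝ) < h := by linarith
  have hr0 : (0:ℝ) < r := by linarith
  have hA : 0 < r^2 - h^2 := by nlinarith
  have hfh : f h = fun s => (s^2/(s^2-h^2)) ^ p := by
    funext s; rw [hf]
  -- first derivative on Ioi h
  have key : ∀ s, h < s → HasDerivAt (f h)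
      (-2*s*h^2/(s^2-h^2)^2 * p * (s^2/(s^2-h^2))^(p-1)) s := by
    intro s hs
    have hAs : 0 < s^2 - h^2 := by nlinarith
    have d1 : HasDerivAt (fun x:ℝ => x^2) (2*s) s := by
      simpa using hasDerivAt_pow 2 s
    have d2 : HasDerivAt (fun x:ℝ => x^2 - h^2) (2*s) s := d1.sub_const _
    have hg : HasDerivAt (fun x:ℝ => x^2/(x^2-h^2)) (-2*s*h^2/(s^2-h^2)^2) s := by
      have d3 := d1.div d2 (ne_of_gt hAs)
      refine d3.congr_deriv ?_
      ring
    have hgpos : (0:ℝ) < s^2/(s^2-h^2) := div_pos (pow_pos (hh0.trans hs) 2) hAs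
    have d4 := hg.rpow_const (p := p) (Or.inl (ne_of_gt hgpos))
    rw [hfh]
    exact d4
  have hd1 : deriv (f h) r = -2*r*h^2/(r^2-h^2)^2 * p * (r^2/(r^2-h^2))^(p-1) :=
    (key r hr).deriv
  -- second derivative
  have hev : deriv (f h) =ᶠ[nhds r]
      (fun s => -2*s*h^2/(s^2-h^2)^2 * p * (s^2/(s^2-h^2))^(p-1)) := by
    filter_upwards [Ioi_mem_nhds hr] with s hs
    exact (key s hs).deriv
  have hAs : 0 < r^2 - h^2 := hA
  have d1 : HasDerivAt (fun x:ℝ => x^2) (2*r) r := by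
    simpa using hasDerivAt_pow 2 r
  have d2 : HasDerivAt (fun x:ℝ => x^2 - h^2) (2*r) r := d1.sub_const _
  have hg : HasDerivAt (fun x:ℝ => x^2/(x^2-h^2)) (-2*r*h^2/(r^2-h^2)^2) r := by
    have d3 := d1.div d2 (ne_of_gt hA)
    refine d3.congr_deriv ?_
    ring
  have hgpos : (0:ℝ) < r^2/(r^2-h^2) := div_pos (pow_pos hr0 2) hA
  have hu : HasDerivAt (fun s:ℝ => -2*s*h^2/(s^2-h^2)^2)
      (2*h^2*(3*r^2+h^2)/(r^2-h^2)^3) r := by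
    have n1 : HasDerivAt (fun s:ℝ => -2*s*h^2) (-2*h^2) r := by
      have := ((hasDerivAt_id r).const_mul (-2:ℝ)).mul_const (h^2)
      simpa [mul_assoc] using this
    have n2 : HasDerivAt (fun s:ℝ => (s^2-h^2)^2) (2*(r^2-h^2)^1*(2*r)) r := by
      simpa using d2.fun_pow 2
    have := n1.div n2 (by positivity)
    refine this.congr_deriv ?_
    rw [div_eq_div_iff (pow_ne_zero _ (pow_ne_zero _ hA.ne')) (pow_ne_zero _ hA.ne')]
    ring
  have hv : HasDerivAt (fun s:ℝ => (s^2/(s^2-h^2))^(p-1))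
      (-2*r*h^2/(r^2-h^2)^2 * (p-1) * (r^2/(r^2-h^2))^(p-1-1)) r :=
    hg.rpow_const (Or.inl (ne_of_gt hgpos))
  have hmulsplit : (fun s:ℝ => -2*s*h^2/(s^2-h^2)^2 * p * (s^2/(s^2-h^2))^(p-1))
      = fun s:ℝ => p * ((-2*s*h^2/(s^2-h^2)^2) * (s^2/(s^2-h^2))^(p-1)) := by
    funext s; ring
  have hdd : HasDerivAt (fun s:ℝ => -2*s*h^2/(s^2-h^2)^2 * p * (s^2/(s^2-h^2))^(p-1))
      (p * ((2*h^2*(3*r^2+h^2)/(r^2-h^2)^3) * (r^2/(r^2-h^2))^(p-1)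
        + (-2*r*h^2/(r^2-h^2)^2) * (-2*r*h^2/(r^2-h^2)^2 * (p-1) * (r^2/(r^2-h^2))^(p-1-1)))) r := by
    rw [hmulsplit]
    exact (hu.mul hv).const_mul p
  have hd2 : deriv (deriv (f h)) r
      = p * ((2*h^2*(3*r^2+h^2)/(r^2-h^2)^3) * (r^2/(r^2-h^2))^(p-1)
        + (-2*r*h^2/(r^2-h^2)^2) * (-2*r*h^2/(r^2-h^2)^2 * (p-1) * (r^2/(r^2-h^2))^(p-1-1))) := by
    rw [hev.deriv_eq]
    exact hdd.deriv
  -- abbreviation facts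
  have hG1 : 1 < r^2/(r^2-h^2) := (one_lt_div hA).2 (by nlinarith)
  have hE0 : 0 < (r^2/(r^2-h^2))^(p-1) := Real.rpow_pos_of_pos hgpos _
  have hE1 : 1 ≤ (r^2/(r^2-h^2))^(p-1) := by
    have := Real.rpow_le_rpow_of_exponent_le hG1.le (show (0:ℝ) ≤ p-1 by linarith)
    simpa using this
  have h2le : h^2 ≤ r^2 := by nlinarith
  have hfrG : f h r = (r^2/(r^2-h^2)) ^ p := by rw [hfh]
  have hfm : f h r ^ m = (r^2/(r^2-h^2))^(p-1) := by
    rw [hfrG, ← Real.rpow_mul hgpos.le, hpm]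
  have hfr : f h r = (r^2/(r^2-h^2)) * (r^2/(r^2-h^2))^(p-1) := by
    rw [hfrG, show (r^2/(r^2-h^2))^p = (r^2/(r^2-h^2))^((1:ℝ)+(p-1)) by
        rw [show (1:ℝ)+(p-1) = p by ring],
      Real.rpow_add hgpos, Real.rpow_one]
  have hfm1 : f h r ^ (m-1) = (r^2/(r^2-h^2))⁻¹ := by
    rw [hfrG, ← Real.rpow_mul hgpos.le,
      show p*(m-1) = -1 by linear_combination hpm, Real.rpow_neg_one]
  have hfm2 : f h r ^ (m-2) = ((r^2/(r^2-h^2))^(p-1) * (r^2/(r^2-h^2))^2)⁻¹ := by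
    rw [hfrG, ← Real.rpow_mul hgpos.le,
      show p*(m-2) = -((p-1)+2) by linear_combination hpm,
      Real.rpow_neg hgpos.le, Real.rpow_add hgpos, Real.rpow_two]
  have hG2 : (r^2/(r^2-h^2))^(p-1-1) = (r^2/(r^2-h^2))^(p-1) / (r^2/(r^2-h^2)) := by
    rw [Real.rpow_sub hgpos, Real.rpow_one]
  rw [hG2] at hd2
  obtain ⟨E, hEdef⟩ : ∃ E : ℝ, (r^2/(r^2-h^2))^(p-1) = E := ⟨_, rfl⟩
  rw [hEdef] at hd1 hd2 hE0 hE1 hfm hfr hfm2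
  refine ⟨?_, ?_, ?_, ?_⟩
  · -- term 1
    rw [hfm, hfr, hd1,
      show r^2/(r^2-h^2) * E - E = E*h^2/(r^2-h^2) by field_simp; ring,
      abs_of_nonneg (div_nonneg (by positivity) hA.le), ← sub_nonneg,
      show -((4*p+4) * (r * (-2*r*h^2/(r^2-h^2)^2 * p * E))) - E*h^2/(r^2-h^2)
        = E*h^2*((8*p^2+8*p)*r^2 - (r^2-h^2))/(r^2-h^2)^2 by field_simp; ring]
    apply div_nonneg _ (by positivity)
    apply mul_nonneg (mul_nonneg hE0.le (sq_nonneg h))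
    nlinarith
  · -- term 2
    rw [hfm2, hd1,
      show r^2 * (E * (r^2/(r^2-h^2))^2)⁻¹ * (-2*r*h^2/(r^2-h^2)^2 * p * E)^2
        = 4*p^2*h^4*E/(r^2-h^2)^2 by field_simp; ring,
      abs_of_nonneg (div_nonneg (by positivity) (by positivity)), ← sub_nonneg,
      show -((4*p+4) * (r * (-2*r*h^2/(r^2-h^2)^2 * p * E))) - 4*p^2*h^4*E/(r^2-h^2)^2
        = E*h^2*((8*p^2+8*p)*r^2 - 4*p^2*h^2)/(r^2-h^2)^2 by field_simp; ring]
    apply div_nonneg _ (by positivity)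
    apply mul_nonneg (mul_nonneg hE0.le (sq_nonneg h))
    nlinarith [mul_le_mul_of_nonneg_left h2le (show (0:ℝ) ≤ 4*p^2 by positivity)]
  · -- term 3
    rw [hfm1, hd2,
      show r^2 * (r^2/(r^2-h^2))⁻¹ *
          (p * (2*h^2*(3*r^2+h^2)/(r^2-h^2)^3 * E
            + -2*r*h^2/(r^2-h^2)^2 * (-2*r*h^2/(r^2-h^2)^2 * (p-1) * (E / (r^2/(r^2-h^2))))))
        = p*E*(2*h^2*(3*r^2+h^2)+4*h^4*(p-1))/(r^2-h^2)^2 by field_simp; ring]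
    have hbr : (0:ℝ) ≤ 2*h^2*(3*r^2+h^2)+4*h^4*(p-1) :=
      add_nonneg (by positivity) (mul_nonneg (by positivity) (by linarith))
    rw [hd1, abs_of_nonneg (div_nonneg (mul_nonneg (mul_nonneg hp0.le hE0.le) hbr) (by positivity)),
      ← sub_nonneg,
      show -((4*p+4) * (r * (-2*r*h^2/(r^2-h^2)^2 * p * E)))
          - p*E*(2*h^2*(3*r^2+h^2)+4*h^4*(p-1))/(r^2-h^2)^2
        = E*h^2*((8*p^2+8*p)*r^2 - (6*p*r^2 + 2*p*h^2 + 4*p*(p-1)*h^2))/(r^2-h^2)^2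
          by field_simp; ring]
    apply div_nonneg _ (by positivity)
    apply mul_nonneg (mul_nonneg hE0.le (sq_nonneg h))
    nlinarith [mul_le_mul_of_nonneg_left h2le (show (0:ℝ) ≤ 4*p^2 by positivity),
      mul_le_mul_of_nonneg_left h2le (show (0:ℝ) ≤ 2*p by positivity)]
  · -- term 4
    rw [hfm1, hd1,
      show r * (r^2/(r^2-h^2))⁻¹ * (-2*r*h^2/(r^2-h^2)^2 * p * E)
        = -(2*p*h^2*E/(r^2-h^2)) by field_simp,
      abs_neg, abs_of_nonneg (div_nonneg (by positivity) hA.le), ← sub_nonneg,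
      show -((4*p+4) * (r * (-2*r*h^2/(r^2-h^2)^2 * p * E))) - 2*p*h^2*E/(r^2-h^2)
        = E*h^2*((8*p^2+8*p)*r^2 - 2*p*(r^2-h^2))/(r^2-h^2)^2 by field_simp; ring]
    apply div_nonneg _ (by positivity)
    apply mul_nonneg (mul_nonneg hE0.le (sq_nonneg h))
    nlinarith
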